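/- Let f be a piecewise contracting interval map which is injective on each contraction piece and satisfies D ⊂ X̃. Then every atom of generation n ≥ 1 is a nondegenerate compact interval [a,b] with a ≠ b, whose endpoints a, b belong to the union of the forward orbits of the points of D; moreover at least one endpoint belongs to the union of orbits of the lateral limits d_i^± at interior boundary points c_1,...,c_{N-1}. -/

import Mathlib

open Filter Topology Set

/-- A piecewise contracting interval map on `X = [c 0, c N]` with contraction pieces
`X_i` delimited by the points `c 0 < c 1 < … < c N`, contraction rate `lam ∈ (0,1)`,
and `fe i` the (unique) continuous `lam`-Lipschitz extension of `f` restricted to the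
`i`-th piece to its closure `[c (i-1), c i]`. The pieces are
`X_1 = [c 0, c 1)`, `X_i = (c (i-1), c i)` for `1 < i < N`, `X_N = (c (N-1), c N]`. -/
structure PCIM where
  N : ℕ
  hN : 2 ≤ N
  c : ℕ → ℝ
  lam : ℝ
  f : ℝ → ℝ
  fe : ℕ → ℝ → ℝ
  hc : StrictMonoOn c (Set.Iic N)
  hlam : lam ∈ Set.Ioo (0 : ℝ) 1
  hmap : Set.MapsTo f (Set.Icc (c 0) (c N)) (Set.Icc (c 0) (c N))
  hfe_lip : ∀ i, 1 ≤ i → i ≤ N →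
    ∀ x ∈ Set.Icc (c (i - 1)) (c i), ∀ y ∈ Set.Icc (c (i - 1)) (c i),
      |fe i x - fe i y| ≤ lam * |x - y|
  hfe_eq : ∀ i, 1 ≤ i → i ≤ N → ∀ x ∈ Set.Ioo (c (i - 1)) (c i), fe i x = f x
  hfe_left : fe 1 (c 0) = f (c 0)
  hfe_right : fe N (c N) = f (c N)

namespace PCIM

variable (P : PCIM)

/-- The phase space `X = [c 0, c N]`. -/
def X : Set ℝ := Set.Icc (P.c 0) (P.c P.N)

/-- The `i`-th contraction piece (`1 ≤ i ≤ N`). -/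
def piece (i : ℕ) : Set ℝ :=
  Set.Ioo (P.c (i - 1)) (P.c i)
    ∪ (if i = 1 then {P.c 0} else (∅ : Set ℝ))
    ∪ (if i = P.N then {P.c P.N} else (∅ : Set ℝ))

/-- `Δ`, the set of interior boundary points of the pieces. -/
def Δ : Set ℝ := {y | ∃ i, 1 ≤ i ∧ i < P.N ∧ y = P.c i}

/-- `X̃ = ⋂ n, f⁻ⁿ(X \ Δ)`: points whose whole forward orbit stays in `X` and avoids `Δ`. -/
def Xt : Set ℝ := {x | ∀ n : ℕ, P.f^[n] x ∈ P.X \ P.Δ}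

/-- Forward orbit of `x`. -/
def orbit (x : ℝ) : Set ℝ := Set.range fun n : ℕ => P.f^[n] x

/-- The ω-limit set of `x`: limits of subsequences of the forward orbit. -/
def omega (x : ℝ) : Set ℝ :=
  {y | ∃ φ : ℕ → ℕ, StrictMono φ ∧
    Filter.Tendsto (fun n => P.f^[φ n] x) Filter.atTop (nhds y)}

/-- `d_i^- = f_i (c_i)`, the left lateral limit of `f` at `c i`. -/
def dminus (i : ℕ) : ℝ := P.fe i (P.c i)

/-- `d_i^+ = f_{i+1} (c_i)`, the right lateral limit of `f` at `c i`. -/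
def dplus (i : ℕ) : ℝ := P.fe (i + 1) (P.c i)

/-- `D⁻ = {d_1^-, …, d_{N-1}^-}`. -/
def Dminus : Set ℝ := {y | ∃ i, 1 ≤ i ∧ i < P.N ∧ y = P.dminus i}

/-- `D⁺ = {d_1^+, …, d_{N-1}^+}`. -/
def Dplus : Set ℝ := {y | ∃ i, 1 ≤ i ∧ i < P.N ∧ y = P.dplus i}

/-- `D`, the set of all one-sided limits of `f` at endpoints of the pieces. -/
def D : Set ℝ := P.Dminus ∪ P.Dplus ∪ {P.fe 1 (P.c 0), P.fe P.N (P.c P.N)}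

/-- `A` is pseudo-invariant: for every `x ∈ A` at least one one-sided limit of `f`
at `x` (i.e. some `fe i x` with `x` in the closure of the `i`-th piece) belongs to `A`. -/
def PseudoInvariant (A : Set ℝ) : Prop :=
  ∀ x ∈ A, ∃ i, 1 ≤ i ∧ i ≤ P.N ∧ x ∈ Set.Icc (P.c (i - 1)) (P.c i) ∧ P.fe i x ∈ A

/-- `F_i(A) = closure (f (A ∩ X_i))`. -/
def Fmap (i : ℕ) (A : Set ℝ) : Set ℝ := closure (P.f '' (A ∩ P.piece i))

/-- For a word `w = [i_1, …, i_n]`, the set `F_{i_n} ∘ … ∘ F_{i_1} (X)`. -/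
def atomOf (w : List ℕ) : Set ℝ := w.foldl (fun S i => P.Fmap i S) P.X

/-- `A` is an atom of generation `n`. -/
def IsAtomGen (n : ℕ) (A : Set ℝ) : Prop :=
  ∃ w : List ℕ, w.length = n ∧ (∀ i ∈ w, 1 ≤ i ∧ i ≤ P.N) ∧
    A = P.atomOf w ∧ A.Nonempty

/-- `Lam n` is `Λ_{n+1}` of the paper: `Λ_1 = closure (f(X \ Δ))`,
`Λ_{n+1} = closure (f(Λ_n \ Δ))`. -/
def Lam (P : PCIM) : ℕ → Set ℝ
  | 0 => closure (P.f '' (P.X \ P.Δ))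
  | n + 1 => closure (P.f '' (P.Lam n \ P.Δ))

/-- The attractor `Λ = ⋂_{n ≥ 1} Λ_n`. -/
def attractor : Set ℝ := ⋂ n : ℕ, P.Lam n

/-- `c i ∈ Δ_lr(x)`: the boundary point `c i` is left-right recurrently visited by the
orbit of `x`. -/
def lrVisited (x : ℝ) (i : ℕ) : Prop :=
  1 ≤ i ∧ i < P.N ∧
  ∃ l r : ℕ → ℕ, StrictMono l ∧ StrictMono r ∧
    (∀ j, P.f^[l j] x ∈ P.piece i) ∧ (∀ j, P.f^[r j] x ∈ P.piece (i + 1)) ∧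
    Filter.Tendsto (fun j => P.f^[l j] x) Filter.atTop (nhds (P.c i)) ∧
    Filter.Tendsto (fun j => P.f^[r j] x) Filter.atTop (nhds (P.c i))

/-- `c i ∈ Δ_lr`: `c i` is left-right recurrently visited by the orbit of some point
of `X̃`. -/
def inΔlr (i : ℕ) : Prop := ∃ x ∈ P.Xt, P.lrVisited x i

/-- The set `Δ_lr ⊆ Δ`. -/
def ΔlrSet : Set ℝ := {y | ∃ i, P.inΔlr i ∧ y = P.c i}

/-- The relation `∼⁺` on `Δ_lr`: `c_i ∼⁺ c_j` iff `c_i = c_j` or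
(`c_i ∈ Δ_lr(d_j^+)` and `c_j ∈ Δ_lr(d_i^+)`). -/
def simP (a b : ℝ) : Prop :=
  a = b ∨ ∃ i j, P.inΔlr i ∧ P.inΔlr j ∧ a = P.c i ∧ b = P.c j ∧
    P.lrVisited (P.dplus j) i ∧ P.lrVisited (P.dplus i) j

/-- The relation `≼⁺` (on representatives): `[c_i] ≼⁺ [c_j]` iff `[c_i] = [c_j]` or
`c_i ∈ Δ_lr(d_j^+)`. -/
def preP (a b : ℝ) : Prop :=
  P.simP a b ∨ ∃ i j, P.inΔlr i ∧ P.inΔlr j ∧ a = P.c i ∧ b = P.c j ∧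
    P.lrVisited (P.dplus j) i

/-- `[c i]` is a minimal class for the partial order `≼⁺`. -/
def MinimalClass (i : ℕ) : Prop :=
  P.inΔlr i ∧ ∀ j, P.inΔlr j → P.preP (P.c j) (P.c i) → P.simP (P.c j) (P.c i)

/-- `f` is injective on each contraction piece. -/
def InjPieces : Prop := ∀ i, 1 ≤ i → i ≤ P.N → Set.InjOn P.f (P.piece i)

/-- `f` is (strictly) increasing on each contraction piece. -/
def IncrPieces : Prop := ∀ i, 1 ≤ i → i ≤ P.N → StrictMonoOn P.f (P.piece i)

/-- `x` is a periodic point of `f`. -/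
def IsPeriodic (x : ℝ) : Prop := ∃ p : ℕ, 1 ≤ p ∧ P.f^[p] x = x

/-- `η` is the itinerary of `x`: `f^[n] x ∈ X_{η n}` for all `n`. -/
def IsItinerary (x : ℝ) (η : ℕ → ℕ) : Prop :=
  ∀ n, 1 ≤ η n ∧ η n ≤ P.N ∧ P.f^[n] x ∈ P.piece (η n)

end PCIM

/-- The word of length `n` of the sequence `η` starting at position `t`. -/
def wordAt (η : ℕ → ℕ) (t n : ℕ) : List ℕ := (List.range n).map fun m => η (t + m)

/-- The complexity function of the sequence `η`: the number of distinct words of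
length `n` occurring in `η`. -/
noncomputable def complexity (η : ℕ → ℕ) (n : ℕ) : ℕ := Set.ncard {w : List ℕ | ∃ t, w = wordAt η t n}

section AuxStmt4

open Set

private lemma real_mono_ext {g : ℝ → ℝ} {p q : ℝ}
    (hc : ContinuousOn g (Set.Icc p q)) (hm : StrictMonoOn g (Set.Ioo p q)) :
    StrictMonoOn g (Set.Icc p q) := by
  intro x hx y hy hxy
  obtain ⟨z, hxz, hzy⟩ := exists_between hxy
  obtain ⟨w, hzw, hwy⟩ := exists_between hzy
  have hzq : z < q := lt_of_lt_of_le (hzw.trans hwy) hy.2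
  have hzm : z ∈ Set.Ioo p q := ⟨hx.1.trans_lt hxz, hzq⟩
  have hwm : w ∈ Set.Ioo p q := ⟨hzm.1.trans hzw, hwy.trans_le hy.2⟩
  have h1 : g x ≤ g z := by
    rcases eq_or_lt_of_le hx.1 with he | hlt
    · have hsub : Set.Ioo x z ⊆ Set.Icc p q := fun t ht =>
        ⟨hx.1.trans ht.1.le, (ht.2.trans hzq).le⟩
      have hcw : Filter.Tendsto g (nhdsWithin x (Set.Ioo x z)) (nhds (g x)) :=
        (hc x hx).mono hsub
      haveI : (nhdsWithin x (Set.Ioo x z)).NeBot := by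
        rw [nhdsWithin_Ioo_eq_nhdsGT hxz]; exact inferInstance
      refine le_of_tendsto hcw ?_
      filter_upwards [self_mem_nhdsWithin] with t ht
      exact (hm ⟨(le_of_eq he).trans_lt ht.1, ht.2.trans hzq⟩ hzm ht.2).le
    · exact (hm ⟨hlt, hxz.trans hzq⟩ hzm hxz).le
  have h2 : g w ≤ g y := by
    rcases eq_or_lt_of_le hy.2 with he | hlt
    · have hsub : Set.Ioo w y ⊆ Set.Icc p q := fun t ht =>
        ⟨(hwm.1.trans ht.1).le, ht.2.le.trans hy.2⟩
      have hcw : Filter.Tendsto g (nhdsWithin y (Set.Ioo w y)) (nhds (g y)) :=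
        (hc y hy).mono hsub
      haveI : (nhdsWithin y (Set.Ioo w y)).NeBot := by
        rw [nhdsWithin_Ioo_eq_nhdsLT hwy]; exact inferInstance
      refine ge_of_tendsto hcw ?_
      filter_upwards [self_mem_nhdsWithin] with t ht
      exact (hm hwm ⟨hwm.1.trans ht.1, ht.2.trans_le hy.2⟩ ht.1).le
    · exact (hm hwm ⟨hwm.1.trans hwy, hlt⟩ hwy).le
  exact h1.trans_lt ((hm hzm hwm hzw).trans_le h2)

private lemma real_anti_ext {g : ℝ → ℝ} {p q : ℝ}
    (hc : ContinuousOn g (Set.Icc p q)) (hm : StrictAntiOn g (Set.Ioo p q)) :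
    StrictAntiOn g (Set.Icc p q) := by
  have h := real_mono_ext (g := fun t => -g t) hc.neg
    (fun x hx y hy hxy => neg_lt_neg (hm hx hy hxy))
  intro x hx y hy hxy
  have := h hx hy hxy
  simpa using this

private lemma real_strict_or {g : ℝ → ℝ} {p q : ℝ} (hpq : p < q)
    (hc : ContinuousOn g (Set.Icc p q)) (hi : Set.InjOn g (Set.Ioo p q)) :
    StrictMonoOn g (Set.Icc p q) ∨ StrictAntiOn g (Set.Icc p q) := by
  obtain ⟨u, hpu, huq⟩ := exists_between hpq
  obtain ⟨v, huv, hvq⟩ := exists_between huq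
  have hu : u ∈ Set.Ioo p q := ⟨hpu, huq⟩
  have hv : v ∈ Set.Ioo p q := ⟨hpu.trans huv, hvq⟩
  have key : ∀ x ∈ Set.Ioo p q, ∀ y ∈ Set.Ioo p q, x < y →
      (g u < g v → g x < g y) ∧ (g v < g u → g y < g x) := by
    intro x hx y hy hxy
    have hsmem : p < min x u := lt_min hx.1 hpu
    have htmem : max y v < q := max_lt hy.2 hvq
    have hst : Set.Icc (min x u) (max y v) ⊆ Set.Ioo p q := fun z hz =>
      ⟨hsmem.trans_le hz.1, hz.2.trans_lt htmem⟩
    have hstle : min x u ≤ max y v := (min_le_left x u).trans (hxy.le.trans (le_max_left y v))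
    have hxmem : x ∈ Set.Icc (min x u) (max y v) := ⟨min_le_left x u, hxy.le.trans (le_max_left y v)⟩
    have hymem : y ∈ Set.Icc (min x u) (max y v) := ⟨(min_le_left x u).trans hxy.le, le_max_left y v⟩
    have humem : u ∈ Set.Icc (min x u) (max y v) := ⟨min_le_right x u, huv.le.trans (le_max_right y v)⟩
    have hvmem : v ∈ Set.Icc (min x u) (max y v) := ⟨(min_le_right x u).trans huv.le, le_max_right y v⟩
    rcases ContinuousOn.strictMonoOn_of_injOn_Icc' hstle
        (hc.mono (hst.trans Set.Ioo_subset_Icc_self)) (hi.mono hst) with hmono | hanti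
    · exact ⟨fun _ => hmono hxmem hymem hxy, fun hgu => absurd (hmono humem hvmem huv) (asymm hgu)⟩
    · exact ⟨fun hgu => absurd (hanti humem hvmem huv) (asymm hgu), fun _ => hanti hxmem hymem hxy⟩
  rcases lt_or_ge (g u) (g v) with hguv | hguv
  · exact Or.inl (real_mono_ext hc (fun x hx y hy hxy => (key x hx y hy hxy).1 hguv))
  · have hne : g v ≠ g u := fun h => huv.ne (hi hu hv h.symm)
    have hlt : g v < g u := hguv.lt_of_ne hne
    exact Or.inr (real_anti_ext hc (fun x hx y hy hxy => (key x hx y hy hxy).2 hlt))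

private lemma cmono (P : PCIM) {i j : ℕ} (hij : i ≤ j) (hj : j ≤ P.N) : P.c i ≤ P.c j :=
  P.hc.monotoneOn (Set.mem_Iic.mpr (hij.trans hj)) (Set.mem_Iic.mpr hj) hij

private lemma cstrict (P : PCIM) {i j : ℕ} (hij : i < j) (hj : j ≤ P.N) : P.c i < P.c j :=
  P.hc (Set.mem_Iic.mpr (hij.le.trans hj)) (Set.mem_Iic.mpr hj) hij

private lemma Ioo_subset_piece (P : PCIM) (j : ℕ) :
    Set.Ioo (P.c (j - 1)) (P.c j) ⊆ P.piece j :=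
  fun _ hx => Or.inl (Or.inl hx)

private lemma piece_subset (P : PCIM) {j : ℕ} (hj1 : 1 ≤ j) (hjN : j ≤ P.N) :
    P.piece j ⊆ Set.Icc (P.c (j - 1)) (P.c j) := by
  intro x hx
  rcases hx with (hx | hx) | hx
  · exact Set.Ioo_subset_Icc_self hx
  · by_cases h : j = 1
    · rw [if_pos h, Set.mem_singleton_iff] at hx
      subst hx; subst h
      exact ⟨le_refl _, (cstrict P (by omega) hjN).le⟩
    · rw [if_neg h] at hx; exact absurd hx (Set.notMem_empty x)
  · by_cases h : j = P.N
    · rw [if_pos h, Set.mem_singleton_iff] at hx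
      subst hx; subst h
      exact ⟨cmono P (Nat.sub_le _ _) (le_refl _), le_refl _⟩
    · rw [if_neg h] at hx; exact absurd hx (Set.notMem_empty x)

private lemma f_eq_fe (P : PCIM) {j : ℕ} (hj1 : 1 ≤ j) (hjN : j ≤ P.N) {x : ℝ}
    (hx : x ∈ P.piece j) : P.f x = P.fe j x := by
  rcases hx with (hx | hx) | hx
  · exact (P.hfe_eq j hj1 hjN x hx).symm
  · by_cases h : j = 1
    · rw [if_pos h, Set.mem_singleton_iff] at hx
      subst hx; subst h
      exact P.hfe_left.symm
    · rw [if_neg h] at hx; exact absurd hx (Set.notMem_empty x)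
  · by_cases h : j = P.N
    · rw [if_pos h, Set.mem_singleton_iff] at hx
      subst hx; subst h
      exact P.hfe_right.symm
    · rw [if_neg h] at hx; exact absurd hx (Set.notMem_empty x)

private lemma fe_cont (P : PCIM) {j : ℕ} (hj1 : 1 ≤ j) (hjN : j ≤ P.N) :
    ContinuousOn (P.fe j) (Set.Icc (P.c (j - 1)) (P.c j)) := by
  have h : LipschitzOnWith ⟨P.lam, P.hlam.1.le⟩ (P.fe j) (Set.Icc (P.c (j - 1)) (P.c j)) := by
    apply LipschitzOnWith.of_dist_le_mul
    intro x hx y hy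
    rw [Real.dist_eq, Real.dist_eq]
    exact P.hfe_lip j hj1 hjN x hx y hy
  exact h.continuousOn

private lemma fe_inj (P : PCIM) (hinj : P.InjPieces) {j : ℕ} (hj1 : 1 ≤ j) (hjN : j ≤ P.N) :
    Set.InjOn (P.fe j) (Set.Ioo (P.c (j - 1)) (P.c j)) := by
  intro x hx y hy h
  apply hinj j hj1 hjN (Ioo_subset_piece P j hx) (Ioo_subset_piece P j hy)
  rw [f_eq_fe P hj1 hjN (Ioo_subset_piece P j hx), f_eq_fe P hj1 hjN (Ioo_subset_piece P j hy)]
  exact h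

private lemma fe_strict (P : PCIM) (hinj : P.InjPieces) {j : ℕ} (hj1 : 1 ≤ j) (hjN : j ≤ P.N) :
    StrictMonoOn (P.fe j) (Set.Icc (P.c (j - 1)) (P.c j)) ∨
      StrictAntiOn (P.fe j) (Set.Icc (P.c (j - 1)) (P.c j)) :=
  real_strict_or (cstrict P (by omega) hjN) (fe_cont P hj1 hjN) (fe_inj P hinj hj1 hjN)

private lemma orbit_self (P : PCIM) (x : ℝ) : x ∈ P.orbit x := ⟨0, rfl⟩

private lemma orbit_fwd (P : PCIM) {d x : ℝ} (h : x ∈ P.orbit d) : P.f x ∈ P.orbit d := by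
  obtain ⟨k, hk⟩ := h
  have hk' : P.f^[k] d = x := hk
  refine ⟨k + 1, ?_⟩
  show P.f^[k + 1] d = P.f x
  rw [Function.iterate_succ_apply', hk']

private def Pm (P : PCIM) (x : ℝ) : Prop := ∃ d ∈ P.Dminus ∪ P.Dplus, x ∈ P.orbit d

private def Strong (P : PCIM) (A : Set ℝ) : Prop :=
  ∃ a b : ℝ, a < b ∧ A = Set.Icc a b ∧ P.c 0 ≤ a ∧ b ≤ P.c P.N ∧
    (∃ d ∈ P.D, a ∈ P.orbit d) ∧ (∃ d ∈ P.D, b ∈ P.orbit d) ∧ (Pm P a ∨ Pm P b)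

private lemma step (P : PCIM) (hinj : P.InjPieces) {j : ℕ} {a b : ℝ}
    (hj1 : 1 ≤ j) (hjN : j ≤ P.N) (ha : P.c 0 ≤ a) (hb : b ≤ P.c P.N) (hab : a < b)
    (hne : (P.Fmap j (Set.Icc a b)).Nonempty)
    (H : (a = P.c 0 ∧ b = P.c P.N) ∨
      ((∃ d ∈ P.D, a ∈ P.orbit d) ∧ (∃ d ∈ P.D, b ∈ P.orbit d) ∧ (Pm P a ∨ Pm P b))) :
    Strong P (P.Fmap j (Set.Icc a b)) := by
  set p := P.c (j - 1) with hp
  set q := P.c j with hq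
  have hpq : p < q := cstrict P (by omega) hjN
  have hp0 : P.c 0 ≤ p := cmono P (by omega) (by omega)
  have hqN : q ≤ P.c P.N := cmono P hjN (le_refl _)
  have hSne : (Set.Icc a b ∩ P.piece j).Nonempty := by
    have h1 := hne
    rw [PCIM.Fmap] at h1
    exact Set.image_nonempty.mp h1.of_closure
  set u := max a p with hu
  set v := min b q with hv
  have hau : a ≤ u := le_max_left _ _
  have hpu : p ≤ u := le_max_right _ _
  have hvb : v ≤ b := min_le_left _ _
  have hvq : v ≤ q := min_le_right _ _
  have huv : u < v := by
    obtain ⟨x, hxab, hxp⟩ := hSne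
    rcases hxp with (hx | hx) | hx
    · rcases lt_or_ge u v with h | h
      · exact h
      · exfalso
        have hux : u ≤ x := max_le hxab.1 hx.1.le
        have hxv : x ≤ v := le_min hxab.2 hx.2.le
        have hxu : x = u := le_antisymm (hxv.trans h) hux
        have hxv2 : x = v := le_antisymm hxv (h.trans hux)
        have hax : a = x := by
          rcases max_choice a p with hm | hm
          · have h2 : a = u := hm.symm
            exact h2.trans hxu.symm
          · have h2 : p = u := hm.symm
            exact absurd hx.1 ((h2.trans hxu.symm).ge.not_gt)
        have hbx : b = x := by
          rcases min_choice b q with hm | hm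
          · have h2 : b = v := hm.symm
            exact h2.trans hxv2.symm
          · have h2 : q = v := hm.symm
            exact absurd hx.2 ((h2.trans hxv2.symm).le.not_gt)
        exact hab.ne (hax.trans hbx.symm)
    · by_cases h1 : j = 1
      · rw [if_pos h1, Set.mem_singleton_iff] at hx
        have hpc : p = P.c 0 := by rw [hp, h1]
        have hac : a = P.c 0 := le_antisymm (hx ▸ hxab.1) ha
        have huc : u = P.c 0 := by rw [hu, hac, hpc, max_self]
        rw [huc, hv]
        apply lt_min
        · exact hac ▸ hab
        · exact hpc ▸ hpq
      · rw [if_neg h1] at hx; exact absurd hx (Set.notMem_empty x)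
    · by_cases h2 : j = P.N
      · rw [if_pos h2, Set.mem_singleton_iff] at hx
        have hqc : q = P.c P.N := by rw [hq, h2]
        have hbc : b = P.c P.N := le_antisymm hb (hx ▸ hxab.2)
        have hvc : v = P.c P.N := by rw [hv, hbc, hqc, min_self]
        rw [hvc, hu]
        apply max_lt
        · exact hbc ▸ hab
        · exact hqc ▸ hpq
      · rw [if_neg h2] at hx; exact absurd hx (Set.notMem_empty x)
  have hIooS : Set.Ioo u v ⊆ Set.Icc a b ∩ P.piece j := by
    intro t ht
    exact ⟨⟨hau.trans ht.1.le, ht.2.le.trans hvb⟩,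
      Ioo_subset_piece P j ⟨hpu.trans_lt ht.1, ht.2.trans_le hvq⟩⟩
  have hSsub : Set.Icc a b ∩ P.piece j ⊆ Set.Icc u v := by
    intro t ht
    have h2 := piece_subset P hj1 hjN ht.2
    exact ⟨max_le ht.1.1 h2.1, le_min ht.1.2 h2.2⟩
  have hIccsub : Set.Icc u v ⊆ Set.Icc p q := Set.Icc_subset_Icc hpu hvq
  have hcont : ContinuousOn (P.fe j) (Set.Icc u v) := (fe_cont P hj1 hjN).mono hIccsub
  have himeq : P.Fmap j (Set.Icc a b) = P.fe j '' Set.Icc u v := by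
    have hfeq : P.f '' (Set.Icc a b ∩ P.piece j) = P.fe j '' (Set.Icc a b ∩ P.piece j) :=
      Set.image_congr fun x hx => f_eq_fe P hj1 hjN hx.2
    have hclosed : IsClosed (P.fe j '' Set.Icc u v) :=
      (isCompact_Icc.image_of_continuousOn hcont).isClosed
    rw [PCIM.Fmap, hfeq]
    apply Set.Subset.antisymm
    · exact closure_minimal (Set.image_mono hSsub) hclosed
    · have hc2 : ContinuousOn (P.fe j) (closure (Set.Ioo u v)) := by
        rw [closure_Ioo huv.ne]; exact hcont
      have h3 := hc2.image_closure
      rw [closure_Ioo huv.ne] at h3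
      exact h3.trans (closure_mono (Set.image_mono hIooS))
  have hFX : P.Fmap j (Set.Icc a b) ⊆ Set.Icc (P.c 0) (P.c P.N) := by
    rw [PCIM.Fmap]
    apply closure_minimal _ isClosed_Icc
    rintro y ⟨x, hx, rfl⟩
    exact P.hmap (Set.Icc_subset_Icc hp0 hqN (piece_subset P hj1 hjN hx.2))
  have hfeU : ∃ d ∈ P.D, P.fe j u ∈ P.orbit d := by
    rcases le_or_gt a p with hcase | hcase
    · have hup : u = p := max_eq_right hcase
      by_cases h1 : j = 1
      · refine ⟨P.fe 1 (P.c 0), Set.mem_union_right _ (Set.mem_insert _ _), ?_⟩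
        rw [hup, hp, h1]
        exact orbit_self P _
      · refine ⟨P.dplus (j - 1),
          Set.mem_union_left _ (Set.mem_union_right _ ⟨j - 1, by omega, by omega, rfl⟩), ?_⟩
        have hje : j - 1 + 1 = j := by omega
        have hpd : P.dplus (j - 1) = P.fe j u := by
          show P.fe (j - 1 + 1) (P.c (j - 1)) = P.fe j u
          rw [hje, ← hp, hup]
        rw [← hpd]
        exact orbit_self P _
    · have hua : u = a := max_eq_left hcase.le
      have haq : a < q := (hua ▸ huv).trans_le hvq
      have hfa : P.fe j a = P.f a := P.hfe_eq j hj1 hjN a ⟨hcase, haq⟩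
      have hane : a ≠ P.c 0 := fun h => absurd (h ▸ hcase) hp0.not_gt
      rcases H with ⟨hac, _⟩ | ⟨⟨d, hd, hdo⟩, _, _⟩
      · exact absurd hac hane
      · exact ⟨d, hd, by rw [hua, hfa]; exact orbit_fwd P hdo⟩
  have hfeV : ∃ d ∈ P.D, P.fe j v ∈ P.orbit d := by
    rcases le_or_gt q b with hcase | hcase
    · have hvq' : v = q := min_eq_right hcase
      by_cases h2 : j = P.N
      · refine ⟨P.fe P.N (P.c P.N), Set.mem_union_right _ (Set.mem_insert_of_mem _ rfl), ?_⟩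
        rw [hvq', hq, h2]
        exact orbit_self P _
      · refine ⟨P.dminus j,
          Set.mem_union_left _ (Set.mem_union_left _ ⟨j, hj1, lt_of_le_of_ne hjN h2, rfl⟩), ?_⟩
        have hpd : P.dminus j = P.fe j v := by
          show P.fe j (P.c j) = P.fe j v
          rw [← hq, hvq']
        rw [← hpd]
        exact orbit_self P _
    · have hvb' : v = b := min_eq_left hcase.le
      have hpb : p < b := hpu.trans_lt (hvb' ▸ huv)
      have hfb : P.fe j b = P.f b := P.hfe_eq j hj1 hjN b ⟨hpb, hcase⟩
      have hbne : b ≠ P.c P.N := fun h => absurd (h ▸ hcase) hqN.not_gt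
      rcases H with ⟨_, hbc⟩ | ⟨_, ⟨d, hd, hdo⟩, _⟩
      · exact absurd hbc hbne
      · exact ⟨d, hd, by rw [hvb', hfb]; exact orbit_fwd P hdo⟩
  have hPm : Pm P (P.fe j u) ∨ Pm P (P.fe j v) := by
    by_cases hL : 2 ≤ j ∧ a ≤ p
    · left
      have hup : u = p := max_eq_right hL.2
      have hje : j - 1 + 1 = j := by omega
      refine ⟨P.dplus (j - 1), Set.mem_union_right _ ⟨j - 1, by omega, by omega, rfl⟩, ?_⟩
      have hpd : P.dplus (j - 1) = P.fe j u := by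
        show P.fe (j - 1 + 1) (P.c (j - 1)) = P.fe j u
        rw [hje, ← hp, hup]
      rw [← hpd]
      exact orbit_self P _
    · by_cases hR : j < P.N ∧ q ≤ b
      · right
        have hvq' : v = q := min_eq_right hR.2
        refine ⟨P.dminus j, Set.mem_union_left _ ⟨j, hj1, hR.1, rfl⟩, ?_⟩
        have hpd : P.dminus j = P.fe j v := by
          show P.fe j (P.c j) = P.fe j v
          rw [← hq, hvq']
        rw [← hpd]
        exact orbit_self P _
      · push_neg at hL hR
        have hua : u = a := by
          rcases le_or_gt a p with hc | hc
          · have hj1' : j = 1 := by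
              by_contra h
              exact absurd hc (hL (by omega)).not_ge
            have hap : a = p := le_antisymm hc (by rw [hp, hj1']; exact ha)
            rw [hu, hap, max_self]
          · exact max_eq_left hc.le
        have hfu : P.fe j u = P.f a := by
          rcases lt_or_ge p a with hc | hc
          · rw [hua]
            exact (P.hfe_eq j hj1 hjN a ⟨hc, (hua ▸ huv).trans_le hvq⟩).trans rfl
          · have hj1' : j = 1 := by
              by_contra h
              exact absurd hc (hL (by omega)).not_ge
            have hac : a = P.c 0 := le_antisymm (by rw [hp, hj1'] at hc; exact hc) ha
            rw [hua, hac, hj1']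
            exact P.hfe_left
        have hvb' : v = b := by
          rcases lt_or_ge b q with hc | hc
          · exact min_eq_left hc.le
          · have hjN' : j = P.N := by
              by_contra h
              exact absurd hc (hR (lt_of_le_of_ne hjN h)).not_ge
            have hbc : b = P.c P.N := le_antisymm hb (by rw [hq, hjN'] at hc; exact hc)
            rw [hv, hbc, hq, hjN', min_self]
        have hfv : P.fe j v = P.f b := by
          rcases lt_or_ge b q with hc | hc
          · rw [hvb']
            exact P.hfe_eq j hj1 hjN b ⟨hpu.trans_lt (hvb' ▸ huv), hc⟩
          · have hjN' : j = P.N := by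
              by_contra h
              exact absurd hc (hR (lt_of_le_of_ne hjN h)).not_ge
            have hbc : b = P.c P.N := le_antisymm hb (by rw [hq, hjN'] at hc; exact hc)
            rw [hvb', hbc, hjN']
            exact P.hfe_right
        rcases H with ⟨hac, hbc⟩ | ⟨_, _, hpm⟩
        · exfalso
          have hj1' : j = 1 := by
            by_contra h
            have h2 := hL (by omega)
            exact absurd (hac ▸ h2) hp0.not_gt
          have hjN' : j = P.N := by
            by_contra h
            have h2 := hR (lt_of_le_of_ne hjN h)
            exact absurd (hbc ▸ h2) hqN.not_gt
          have h2 := P.hN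
          omega
        · rcases hpm with ⟨d, hd, hdo⟩ | ⟨d, hd, hdo⟩
          · exact Or.inl ⟨d, hd, by rw [hfu]; exact orbit_fwd P hdo⟩
          · exact Or.inr ⟨d, hd, by rw [hfv]; exact orbit_fwd P hdo⟩
  rcases fe_strict P hinj hj1 hjN with hmono | hanti
  · have hm' : StrictMonoOn (P.fe j) (Set.Icc u v) := hmono.mono hIccsub
    have humem : u ∈ Set.Icc u v := Set.left_mem_Icc.mpr huv.le
    have hvmem : v ∈ Set.Icc u v := Set.right_mem_Icc.mpr huv.le
    have hlt : P.fe j u < P.fe j v := hm' humem hvmem huv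
    have himg : P.fe j '' Set.Icc u v = Set.Icc (P.fe j u) (P.fe j v) := by
      apply Set.Subset.antisymm
      · rintro y ⟨x, hx, rfl⟩
        exact ⟨hm'.monotoneOn humem hx hx.1, hm'.monotoneOn hx hvmem hx.2⟩
      · exact intermediate_value_Icc huv.le hcont
    refine ⟨P.fe j u, P.fe j v, hlt, by rw [himeq, himg], ?_, ?_, hfeU, hfeV, hPm⟩
    · have hmem : P.fe j u ∈ P.Fmap j (Set.Icc a b) := by
        rw [himeq, himg]; exact Set.left_mem_Icc.mpr hlt.le
      exact (hFX hmem).1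
    · have hmem : P.fe j v ∈ P.Fmap j (Set.Icc a b) := by
        rw [himeq, himg]; exact Set.right_mem_Icc.mpr hlt.le
      exact (hFX hmem).2
  · have hm' : StrictAntiOn (P.fe j) (Set.Icc u v) := hanti.mono hIccsub
    have humem : u ∈ Set.Icc u v := Set.left_mem_Icc.mpr huv.le
    have hvmem : v ∈ Set.Icc u v := Set.right_mem_Icc.mpr huv.le
    have hlt : P.fe j v < P.fe j u := hm' humem hvmem huv
    have himg : P.fe j '' Set.Icc u v = Set.Icc (P.fe j v) (P.fe j u) := by
      apply Set.Subset.antisymm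
      · rintro y ⟨x, hx, rfl⟩
        exact ⟨hm'.antitoneOn hx hvmem hx.2, hm'.antitoneOn humem hx hx.1⟩
      · exact intermediate_value_Icc' huv.le hcont
    refine ⟨P.fe j v, P.fe j u, hlt, by rw [himeq, himg], ?_, ?_, hfeV, hfeU, hPm.symm⟩
    · have hmem : P.fe j v ∈ P.Fmap j (Set.Icc a b) := by
        rw [himeq, himg]; exact Set.left_mem_Icc.mpr hlt.le
      exact (hFX hmem).1
    · have hmem : P.fe j u ∈ P.Fmap j (Set.Icc a b) := by
        rw [himeq, himg]; exact Set.right_mem_Icc.mpr hlt.le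
      exact (hFX hmem).2

private lemma atom_strong (P : PCIM) (hinj : P.InjPieces) :
    ∀ w : List ℕ, (∀ i ∈ w, 1 ≤ i ∧ i ≤ P.N) → (P.atomOf w).Nonempty → w ≠ [] →
      Strong P (P.atomOf w) := by
  intro w
  induction w using List.reverseRecOn with
  | nil => intro _ _ h0; exact absurd rfl h0
  | append_singleton w j ih =>
    intro hw hne _
    have hj := hw j (List.mem_append.mpr (Or.inr (List.mem_singleton.mpr rfl)))
    have hfold : P.atomOf (w ++ [j]) = P.Fmap j (P.atomOf w) := by
      simp [PCIM.atomOf, List.foldl_append]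
    rw [hfold] at hne ⊢
    have hprev : ∃ a b : ℝ, a < b ∧ P.atomOf w = Set.Icc a b ∧ P.c 0 ≤ a ∧ b ≤ P.c P.N ∧
        ((a = P.c 0 ∧ b = P.c P.N) ∨
          ((∃ d ∈ P.D, a ∈ P.orbit d) ∧ (∃ d ∈ P.D, b ∈ P.orbit d) ∧ (Pm P a ∨ Pm P b))) := by
      rcases eq_or_ne w [] with rfl | hwne
      · exact ⟨P.c 0, P.c P.N, cstrict P (by have := P.hN; omega) (le_refl _), rfl,
          le_refl _, le_refl _, Or.inl ⟨rfl, rfl⟩⟩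
      · have hneC := hne
        rw [PCIM.Fmap] at hneC
        obtain ⟨y, x, hxmem, -⟩ := hneC.of_closure
        obtain ⟨a, b, h1, h2, h3, h4, h5, h6, h7⟩ :=
          ih (fun i hi => hw i (List.mem_append.mpr (Or.inl hi))) ⟨x, hxmem.1⟩ hwne
        exact ⟨a, b, h1, h2, h3, h4, Or.inr ⟨h5, h6, h7⟩⟩
    obtain ⟨a, b, hab, heq, ha2, hb2, H⟩ := hprev
    rw [heq] at hne ⊢
    exact step P hinj hj.1 hj.2 ha2 hb2 hab hne H

end AuxStmt4

/-- If `f` is injective on each piece and `D ⊆ X̃`, every atom of generation `n ≥ 1`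
is a nondegenerate compact interval `[a, b]` whose endpoints lie on orbits of points of
`D`, at least one of them on the orbit of a lateral limit `d_i^±` at an interior
boundary point. -/
theorem stmt4 (P : PCIM) (hinj : P.InjPieces) (hD : P.D ⊆ P.Xt)
    (n : ℕ) (hn : 1 ≤ n) (A : Set ℝ) (hA : P.IsAtomGen n A) :
    ∃ a b : ℝ, a ≠ b ∧ A = Set.Icc a b ∧
      (∃ d ∈ P.D, a ∈ P.orbit d) ∧ (∃ d ∈ P.D, b ∈ P.orbit d) ∧
      ((∃ d ∈ P.Dminus ∪ P.Dplus, a ∈ P.orbit d) ∨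
        (∃ d ∈ P.Dminus ∪ P.Dplus, b ∈ P.orbit d)) := by
  obtain ⟨w, hlen, hw, hAeq, hAne⟩ := hA
  have hw0 : w ≠ [] := by
    intro h
    rw [h] at hlen
    simp at hlen
    omega
  obtain ⟨a, b, hab, heq, -, -, h1, h2, h3⟩ :=
    atom_strong P hinj w hw (hAeq ▸ hAne) hw0
  exact ⟨a, b, hab.ne, hAeq.trans heq, h1, h2, h3⟩
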